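/- arXiv:2311.08757 — 2 statements merged into one kernel-verified Lean document; each statement's English description precedes it below -/
import Mathlib

section
/- Lower spectral bound for the additive Schwarz operator from a stable decomposition: let A be a real symmetric positive definite n×n matrix; for i = 1,…,N let R_i be a real n_i×n matrix such that A_i := R_i·A·R_iᵀ is positive definite; define M⁻¹ := ∑_{i=1}^N R_iᵀ·A_i⁻¹·R_i. Assume there is a constant C₀ > 0 such that every x ∈ ℝⁿ admits a decomposition x = ∑_{i=1}^N R_iᵀ·x_i with x_i ∈ ℝ^{n_i} and ∑_{i=1}^N x_iᵀ·A_i·x_i ≤ C₀·xᵀ·A·x. Then for every x ∈ ℝⁿ, xᵀ·A·x ≤ C₀ · xᵀ·A·M⁻¹·A·x; equivalently, the smallest eigenvalue of the preconditioned operator M⁻¹·A is at least 1/C₀. -/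
open Matrix

private lemma sum_dotProduct' {m : Type*} [Fintype m] {ι : Type*} (s : Finset ι)
    (f : ι → m → ℝ) (w : m → ℝ) : (∑ i ∈ s, f i) ⬝ᵥ w = ∑ i ∈ s, f i ⬝ᵥ w := by
  simp only [dotProduct, Finset.sum_apply, Finset.sum_mul]
  exact Finset.sum_comm

private lemma dotProduct_sum' {m : Type*} [Fintype m] {ι : Type*} (s : Finset ι)
    (v : m → ℝ) (f : ι → m → ℝ) : v ⬝ᵥ (∑ i ∈ s, f i) = ∑ i ∈ s, v ⬝ᵥ f i := by
  simp only [dotProduct, Finset.sum_apply, Finset.mul_sum]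
  exact Finset.sum_comm

private lemma sum_mulVec' {m k : Type*} [Fintype m] [Fintype k] {ι : Type*} (s : Finset ι)
    (f : ι → Matrix k m ℝ) (w : m → ℝ) :
    (∑ i ∈ s, f i).mulVec w = ∑ i ∈ s, (f i).mulVec w := by
  ext j
  simp only [Matrix.mulVec, dotProduct, Matrix.sum_apply, Finset.sum_apply, Finset.sum_mul]
  exact Finset.sum_comm

/-- Lower spectral bound for the additive Schwarz operator: if every `x` admits a
`C₀`-stable decomposition `x = ∑ Rᵢᵀ xᵢ` with `∑ xᵢᵀ Aᵢ xᵢ ≤ C₀ xᵀAx`, then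
`xᵀAx ≤ C₀ · xᵀ A M⁻¹ A x` for the additive Schwarz preconditioner
`M⁻¹ = ∑ Rᵢᵀ Aᵢ⁻¹ Rᵢ`, i.e. `λmin(M⁻¹A) ≥ 1/C₀`. -/
theorem additive_schwarz_lower_bound
    (n N : ℕ) (ni : Fin N → ℕ)
    (A : Matrix (Fin n) (Fin n) ℝ) (hA : A.PosDef)
    (R : (i : Fin N) → Matrix (Fin (ni i)) (Fin n) ℝ)
    (hAi : ∀ i, (R i * A * (R i)ᵀ).PosDef)
    (C₀ : ℝ) (hC₀ : 0 < C₀)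
    (hstable : ∀ x : Fin n → ℝ, ∃ xi : (i : Fin N) → Fin (ni i) → ℝ,
      x = ∑ i, (R i)ᵀ.mulVec (xi i) ∧
      ∑ i, xi i ⬝ᵥ (R i * A * (R i)ᵀ).mulVec (xi i) ≤ C₀ * (x ⬝ᵥ A.mulVec x)) :
    ∀ x : Fin n → ℝ,
      x ⬝ᵥ A.mulVec x ≤
        C₀ * (x ⬝ᵥ (A * (∑ i, (R i)ᵀ * (R i * A * (R i)ᵀ)⁻¹ * R i) * A).mulVec x) := by
  intro x
  obtain ⟨xi, hx, hs⟩ := hstable x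
  set Ai : (i : Fin N) → Matrix (Fin (ni i)) (Fin (ni i)) ℝ :=
    fun i => R i * A * (R i)ᵀ with hAidef
  have hAsymm : Aᵀ = A := hA.1.eq
  have hAisymm : ∀ i, (Ai i)ᵀ = Ai i := by
    intro i
    simp [hAidef, Matrix.transpose_mul, Matrix.mul_assoc, hAsymm]
  -- yᵢ := Aᵢ⁻¹ Rᵢ A x
  set y : (i : Fin N) → Fin (ni i) → ℝ :=
    fun i => (Ai i)⁻¹.mulVec ((R i).mulVec (A.mulVec x)) with hy
  have hinv : ∀ i, Ai i * (Ai i)⁻¹ = 1 := fun i =>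
    Matrix.mul_nonsing_inv _ (isUnit_iff_ne_zero.mpr (hAi i).det_pos.ne')
  have hAiy : ∀ i, (Ai i).mulVec (y i) = (R i).mulVec (A.mulVec x) := by
    intro i
    show Ai i *ᵥ ((Ai i)⁻¹ *ᵥ (R i *ᵥ A *ᵥ x)) = _
    rw [Matrix.mulVec_mulVec, hinv i, Matrix.one_mulVec]
  -- q = ∑ xᵢ ⬝ Aᵢ yᵢ
  have hq : x ⬝ᵥ A.mulVec x = ∑ i, xi i ⬝ᵥ (Ai i).mulVec (y i) := by
    conv_lhs => rw [hx]
    rw [sum_dotProduct']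
    refine Finset.sum_congr rfl fun i _ => ?_
    rw [Matrix.mulVec_transpose, ← Matrix.dotProduct_mulVec, ← hx, ← hAiy i]
  -- T = ∑ yᵢ ⬝ Aᵢ yᵢ
  have hT : x ⬝ᵥ (A * (∑ i, (R i)ᵀ * (Ai i)⁻¹ * R i) * A).mulVec x
      = ∑ i, y i ⬝ᵥ (Ai i).mulVec (y i) := by
    have : A * (∑ i, (R i)ᵀ * (Ai i)⁻¹ * R i) * A
        = ∑ i, A * ((R i)ᵀ * (Ai i)⁻¹ * R i) * A := by
      rw [Finset.mul_sum, Finset.sum_mul]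
    rw [this]
    rw [sum_mulVec', dotProduct_sum']
    refine Finset.sum_congr rfl fun i _ => ?_
    have h1 : (A * ((R i)ᵀ * (Ai i)⁻¹ * R i) * A).mulVec x
        = A.mulVec ((R i)ᵀ.mulVec ((Ai i)⁻¹.mulVec ((R i).mulVec (A.mulVec x)))) := by
      simp only [← Matrix.mulVec_mulVec, Matrix.mul_assoc]
    rw [h1]
    show x ⬝ᵥ A *ᵥ (R i)ᵀ *ᵥ y i = y i ⬝ᵥ Ai i *ᵥ y i
    rw [Matrix.dotProduct_mulVec, ← Matrix.mulVec_transpose, hAsymm,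
      Matrix.dotProduct_mulVec, Matrix.vecMul_transpose, ← hAiy i,
      dotProduct_comm]
  -- per-term inequality
  have hterm : ∀ i, 2 * C₀ * (xi i ⬝ᵥ (Ai i).mulVec (y i))
      ≤ xi i ⬝ᵥ (Ai i).mulVec (xi i) + C₀ ^ 2 * (y i ⬝ᵥ (Ai i).mulVec (y i)) := by
    intro i
    have h0 := (hAi i).posSemidef.dotProduct_mulVec_nonneg (xi i - C₀ • y i)
    simp only [star_trivial] at h0
    have h0 : (0:ℝ) ≤ (xi i - C₀ • y i) ⬝ᵥ (Ai i).mulVec (xi i - C₀ • y i) := h0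
    have hsym : xi i ⬝ᵥ (Ai i).mulVec (y i) = y i ⬝ᵥ (Ai i).mulVec (xi i) := by
      rw [Matrix.dotProduct_mulVec, ← Matrix.mulVec_transpose, hAisymm i,
        dotProduct_comm]
    have hexp : (xi i - C₀ • y i) ⬝ᵥ (Ai i).mulVec (xi i - C₀ • y i)
        = xi i ⬝ᵥ (Ai i).mulVec (xi i) - 2 * C₀ * (xi i ⬝ᵥ (Ai i).mulVec (y i))
          + C₀ ^ 2 * (y i ⬝ᵥ (Ai i).mulVec (y i)) := by
      rw [Matrix.mulVec_sub, Matrix.mulVec_smul]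
      simp only [sub_dotProduct, dotProduct_sub, smul_dotProduct,
        dotProduct_smul, smul_eq_mul]
      rw [hsym]
      ring
    rw [hexp] at h0
    linarith
  have hsum : 2 * C₀ * (x ⬝ᵥ A.mulVec x)
      ≤ (∑ i, xi i ⬝ᵥ (Ai i).mulVec (xi i))
        + C₀ ^ 2 * ∑ i, y i ⬝ᵥ (Ai i).mulVec (y i) := by
    rw [hq, Finset.mul_sum, Finset.mul_sum, ← Finset.sum_add_distrib]
    exact Finset.sum_le_sum fun i _ => hterm i
  rw [hT]
  nlinarith [hs, hsum]
end

section
/- Upper spectral bound for the additive Schwarz operator from a finite coloring: let A be a real symmetric positive definite n×n matrix; for i = 1,…,N let R_i be a real n_i×n matrix such that A_i := R_i·A·R_iᵀ is positive definite; define M⁻¹ := ∑_{i=1}^N R_iᵀ·A_i⁻¹·R_i. Assume there is a coloring c : {1,…,N} → {1,…,k} such that R_i·A·R_jᵀ = 0 whenever i ≠ j and c(i) = c(j). Then for every x ∈ ℝⁿ, xᵀ·A·M⁻¹·A·x ≤ k · xᵀ·A·x; equivalently, the largest eigenvalue of the preconditioned operator M⁻¹·A is at most the number of colors k. -/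
open Matrix

/-- Upper spectral bound for the additive Schwarz operator from a finite coloring:
if `Rᵢ A Rⱼᵀ = 0` for distinct same-colored indices, then
`xᵀ A M⁻¹ A x ≤ k · xᵀAx` for the additive Schwarz preconditioner
`M⁻¹ = ∑ Rᵢᵀ Aᵢ⁻¹ Rᵢ`, i.e. `λmax(M⁻¹A) ≤ k`, the number of colors. -/
theorem additive_schwarz_upper_bound
    (n N : ℕ) (ni : Fin N → ℕ)
    (A : Matrix (Fin n) (Fin n) ℝ) (hA : A.PosDef)
    (R : (i : Fin N) → Matrix (Fin (ni i)) (Fin n) ℝ)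
    (hAi : ∀ i, (R i * A * (R i)ᵀ).PosDef)
    (k : ℕ) (hk : 0 < k) (c : Fin N → Fin k)
    (hcolor : ∀ i j, i ≠ j → c i = c j → R i * A * (R j)ᵀ = 0) :
    ∀ x : Fin n → ℝ,
      x ⬝ᵥ (A * (∑ i, (R i)ᵀ * (R i * A * (R i)ᵀ)⁻¹ * R i) * A).mulVec x ≤
        (k : ℝ) * (x ⬝ᵥ A.mulVec x) := by
  intro x
  set T : Fin N → Matrix (Fin n) (Fin n) ℝ :=
    fun i => (R i)ᵀ * (R i * A * (R i)ᵀ)⁻¹ * R i with hT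
  have hAsym : Aᵀ = A := hA.isHermitian.eq
  have hinv : ∀ i, (R i * A * (R i)ᵀ)⁻¹ * (R i * A * (R i)ᵀ) = 1 :=
    fun i => Matrix.nonsing_inv_mul _ (hAi i).det_pos.ne'.isUnit
  have hinvsym : ∀ i, ((R i * A * (R i)ᵀ)⁻¹)ᵀ = (R i * A * (R i)ᵀ)⁻¹ := by
    intro i
    rw [Matrix.transpose_nonsing_inv]
    congr 1
    exact (hAi i).isHermitian.eq
  set P : Fin k → Matrix (Fin n) (Fin n) ℝ :=
    fun ℓ => ∑ i ∈ Finset.univ.filter (fun i => c i = ℓ), T i with hP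
  have hsum : ∑ ℓ, P ℓ = ∑ i, T i := Finset.sum_fiberwise Finset.univ c T
  have hPsym : ∀ ℓ, (P ℓ)ᵀ = P ℓ := by
    intro ℓ
    simp only [hP, Matrix.transpose_sum]
    refine Finset.sum_congr rfl fun i _ => ?_
    simp only [hT]
    rw [Matrix.transpose_mul, Matrix.transpose_mul, Matrix.transpose_transpose,
      hinvsym i]
    simp only [Matrix.mul_assoc]
  have hTAT : ∀ i j, i ≠ j → c i = c j → T i * A * T j = 0 := by
    intro i j hij hc
    have h1 : T i * A * T j =
        (R i)ᵀ * ((R i * A * (R i)ᵀ)⁻¹ * ((R i * A * (R j)ᵀ) *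
          ((R j * A * (R j)ᵀ)⁻¹ * R j))) := by
      simp only [hT, Matrix.mul_assoc]
    rw [h1, hcolor i j hij hc]
    simp
  have hTAT' : ∀ i, T i * A * T i = T i := by
    intro i
    have h1 : T i * A * T i =
        (R i)ᵀ * (((R i * A * (R i)ᵀ)⁻¹ * (R i * A * (R i)ᵀ)) *
          ((R i * A * (R i)ᵀ)⁻¹ * R i)) := by
      simp only [hT, Matrix.mul_assoc]
    rw [h1, hinv i]
    simp [hT, Matrix.mul_assoc]
  have hPAP : ∀ ℓ, P ℓ * A * P ℓ = P ℓ := by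
    intro ℓ
    simp only [hP]
    rw [Finset.sum_mul, Finset.sum_mul]
    simp only [Finset.mul_sum]
    refine Finset.sum_congr rfl fun i hi => ?_
    simp only [Finset.mem_filter] at hi
    rw [Finset.sum_eq_single_of_mem i (by simp [hi.2])]
    · exact hTAT' i
    · intro j hj hji
      simp only [Finset.mem_filter] at hj
      exact hTAT i j (Ne.symm hji) (hi.2.trans hj.2.symm)
  have hadj : ∀ (B : Matrix (Fin n) (Fin n) ℝ) (u v : Fin n → ℝ),
      u ⬝ᵥ (Bᵀ).mulVec v = (B.mulVec u) ⬝ᵥ v := by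
    intro B u v
    rw [Matrix.dotProduct_mulVec, ← Matrix.mulVec_transpose Bᵀ u,
      Matrix.transpose_transpose]
  have hsymm : ∀ u v : Fin n → ℝ, u ⬝ᵥ A.mulVec v = v ⬝ᵥ A.mulVec u := by
    intro u v
    rw [← hAsym, hadj, hAsym, dotProduct_comm]
  have hle : ∀ ℓ, x ⬝ᵥ (A * P ℓ * A).mulVec x ≤ x ⬝ᵥ A.mulVec x := by
    intro ℓ
    set y : Fin n → ℝ := (P ℓ).mulVec (A.mulVec x) with hy
    have hAy : A.mulVec y = (A * P ℓ * A).mulVec x := by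
      rw [hy, Matrix.mulVec_mulVec, Matrix.mulVec_mulVec]
    have hxy : x ⬝ᵥ A.mulVec y = x ⬝ᵥ (A * P ℓ * A).mulVec x := by rw [hAy]
    have hyx : y ⬝ᵥ A.mulVec x = x ⬝ᵥ (A * P ℓ * A).mulVec x := by
      rw [hsymm y x, hxy]
    have hyy : y ⬝ᵥ A.mulVec y = x ⬝ᵥ (A * P ℓ * A).mulVec x := by
      have hyw : y = ((P ℓ * A)ᵀ)ᵀ.mulVec x := by
        rw [Matrix.transpose_transpose, hy, Matrix.mulVec_mulVec]
      calc y ⬝ᵥ A.mulVec y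
          = ((P ℓ * A)ᵀ)ᵀ.mulVec x ⬝ᵥ A.mulVec y := by rw [← hyw]
        _ = x ⬝ᵥ ((P ℓ * A)ᵀ).mulVec (A.mulVec y) := (hadj _ _ _).symm
        _ = x ⬝ᵥ ((P ℓ * A)ᵀ * (A * P ℓ * A)).mulVec x := by
            rw [hAy, Matrix.mulVec_mulVec]
        _ = x ⬝ᵥ (A * P ℓ * A).mulVec x := by
            rw [Matrix.transpose_mul, hAsym, hPsym ℓ]
            have : A * P ℓ * (A * P ℓ * A) = A * (P ℓ * A * P ℓ) * A := by
              simp only [Matrix.mul_assoc]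
            rw [this, hPAP ℓ]
    have hpos : 0 ≤ (x - y) ⬝ᵥ A.mulVec (x - y) := hA.posSemidef.dotProduct_mulVec_nonneg (x - y)
    have hexp : (x - y) ⬝ᵥ A.mulVec (x - y) =
        x ⬝ᵥ A.mulVec x - x ⬝ᵥ (A * P ℓ * A).mulVec x := by
      rw [Matrix.mulVec_sub, sub_dotProduct, dotProduct_sub,
        dotProduct_sub, hxy, hyx, hyy]
      ring
    linarith [hpos, hexp]
  have hmv : (∑ ℓ, (A * P ℓ * A)).mulVec x = ∑ ℓ, (A * P ℓ * A).mulVec x := by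
    funext j
    simp only [Matrix.mulVec, dotProduct, Matrix.sum_apply,
      Finset.sum_apply, Finset.sum_mul]
    exact Finset.sum_comm
  have hqsum : x ⬝ᵥ (∑ ℓ, (A * P ℓ * A)).mulVec x
      = ∑ ℓ, x ⬝ᵥ (A * P ℓ * A).mulVec x := by
    rw [hmv]
    simp only [dotProduct, Finset.sum_apply, Finset.mul_sum]
    exact Finset.sum_comm
  calc x ⬝ᵥ (A * (∑ i, T i) * A).mulVec x
      = ∑ ℓ, x ⬝ᵥ (A * P ℓ * A).mulVec x := by
        rw [← hsum, Finset.mul_sum, Finset.sum_mul, hqsum]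
    _ ≤ ∑ _ℓ : Fin k, x ⬝ᵥ A.mulVec x := Finset.sum_le_sum fun ℓ _ => hle ℓ
    _ = (k : ℝ) * (x ⬝ᵥ A.mulVec x) := by
        simp [Finset.sum_const, nsmul_eq_mul]
end
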